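/- Let 1 ≤ p < q ≤ ∞, put α = 1/p − 1/q (with the convention 1/∞ = 0). There is a positive integer C₆, depending only on p and q, with the following property: for all m, n ∈ ℕ with 2 ≤ n ≤ m ≤ 2ⁿ, all Banach spaces X, Y, every bounded linear operator T₀ from X to Y and every s ∈ ℕ, one has e_{C₆·n + s}(T(m)) ≤ 2^{1/q}·max( e_s(T(k)), ‖T₀‖/(k+1)^α ), where k is the smallest positive integer with k ≥ n/(2·log₂(2m/n)), and for j ∈ ℕ, T(j) : ℓ_p^j(X) → ℓ_q^j(Y) denotes the diagonal operator T(j)(x₁, …, x_j) = (T₀(x₁), …, T₀(x_j)). -/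

import Mathlib

open Metric Set
open scoped ENNReal

/-- The `n`-th (dyadic) entropy number of a bounded linear operator `T : X → Y`:
the infimum of all `ε > 0` such that the image of the closed unit ball of `X`
can be covered by `2 ^ (n - 1)` closed balls of radius `ε` in `Y`. -/
noncomputable def entropyNum {X Y : Type*} [NormedAddCommGroup X] [NormedSpace ℝ X]
    [NormedAddCommGroup Y] [NormedSpace ℝ Y] (n : ℕ) (T : X →L[ℝ] Y) : ℝ :=
  sInf {ε : ℝ | 0 < ε ∧ ∃ S : Finset Y, S.card ≤ 2 ^ (n - 1) ∧
    T '' closedBall 0 1 ⊆ ⋃ y ∈ S, closedBall y ε}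

/-- The `n`-th (dyadic) inner entropy number of a bounded linear operator `T : X → Y`:
the supremum of all `ε > 0` such that there are `2 ^ (n - 1) + 1` points in the closed
unit ball of `X` whose images under `T` are pairwise at distance at least `2 * ε`. -/
noncomputable def innerEntropyNum {X Y : Type*} [NormedAddCommGroup X] [NormedSpace ℝ X]
    [NormedAddCommGroup Y] [NormedSpace ℝ Y] (n : ℕ) (T : X →L[ℝ] Y) : ℝ :=
  sSup {ε : ℝ | 0 < ε ∧ ∃ x : Fin (2 ^ (n - 1) + 1) → X, (∀ i, ‖x i‖ ≤ 1) ∧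
    ∀ i j, i ≠ j → 2 * ε ≤ ‖T (x i) - T (x j)‖}



private lemma pow_self_le_aux : ∀ k : ℕ, (k:ℝ)^k ≤ 3^k * (Nat.factorial k : ℝ) := by
  intro k
  induction k with
  | zero => simp
  | succ k ih =>
    have hk0 : (0:ℝ) ≤ (k:ℝ)^k := by positivity
    have h3 : ((k:ℝ)+1)^k ≤ 3 * (k:ℝ)^k := by
      rcases Nat.eq_zero_or_pos k with hk | hk
      · subst hk; norm_num
      · have hkR : (0:ℝ) < k := by exact_mod_cast hk
        have h1 : ((k:ℝ)+1) ≤ (k:ℝ) * Real.exp (1/k) := by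
          have h := Real.add_one_le_exp (1/(k:ℝ))
          have h2 : (k:ℝ) * (1/(k:ℝ) + 1) ≤ (k:ℝ) * Real.exp (1/k) :=
            mul_le_mul_of_nonneg_left h hkR.le
          have h3 : (k:ℝ) * (1/(k:ℝ) + 1) = (k:ℝ) + 1 := by field_simp; ring
          linarith
        have h2 : ((k:ℝ)+1)^k ≤ ((k:ℝ) * Real.exp (1/k))^k :=
          pow_le_pow_left₀ (by positivity) h1 k
        have h3 : ((k:ℝ) * Real.exp (1/k))^k = (k:ℝ)^k * Real.exp 1 := by
          rw [mul_pow, ← Real.exp_nat_mul]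
          congr 2
          field_simp
        have h4 : Real.exp 1 ≤ 3 := by
          have := Real.exp_one_lt_d9
          linarith
        calc ((k:ℝ)+1)^k ≤ (k:ℝ)^k * Real.exp 1 := by rw [← h3]; exact h2
          _ ≤ (k:ℝ)^k * 3 := by nlinarith
          _ = 3 * (k:ℝ)^k := by ring
    have hfac : ((Nat.factorial (k+1)) : ℝ) = ((k:ℝ)+1) * (Nat.factorial k : ℝ) := by
      push_cast [Nat.factorial_succ]; ring
    have hk1 : (0:ℝ) ≤ (k:ℝ) + 1 := by positivity
    push_cast
    calc ((k:ℝ)+1)^(k+1) = ((k:ℝ)+1) * ((k:ℝ)+1)^k := by ring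
      _ ≤ ((k:ℝ)+1) * (3 * (k:ℝ)^k) := by nlinarith
      _ ≤ ((k:ℝ)+1) * (3 * (3^k * (Nat.factorial k : ℝ))) := by
          have : (k:ℝ)^k ≤ 3^k * (Nat.factorial k : ℝ) := ih
          nlinarith
      _ = 3^(k+1) * (((k:ℝ)+1) * (Nat.factorial k : ℝ)) := by ring
      _ = 3^(k+1) * ((Nat.factorial (k+1)) : ℝ) := by rw [hfac]

private lemma choose_le_aux (m k : ℕ) (hk : 1 ≤ k) :
    (m.choose k : ℝ) ≤ (3*m/k)^k := by
  have hkR : (0:ℝ) < k := by exact_mod_cast hk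
  have hfac : (0:ℝ) < (Nat.factorial k : ℝ) := by exact_mod_cast k.factorial_pos
  have h1 : (m.choose k : ℝ) ≤ (m^k : ℝ) / (Nat.factorial k : ℝ) := by
    exact_mod_cast Nat.choose_le_pow_div k m
  refine h1.trans ?_
  rw [div_pow, div_le_div_iff₀ (by positivity) (by positivity)]
  have := pow_self_le_aux k
  have hm : (0:ℝ) ≤ (m:ℝ)^k := by positivity
  calc ((m:ℝ)^k) * (k:ℝ)^k ≤ (m:ℝ)^k * (3^k * (Nat.factorial k : ℝ)) := by nlinarith
    _ = (3*(m:ℝ))^k * (Nat.factorial k : ℝ) := by rw [mul_pow]; ring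

set_option maxHeartbeats 1000000 in

private lemma count_bound {m n k : ℕ} (hn : 2 ≤ n) (hnm : n ≤ m) (hm2 : m ≤ 2^n)
    (hk1 : 1 ≤ k)
    (hk2 : (n:ℝ) / (2 * Real.logb 2 (2 * m / n)) ≤ (k:ℝ))
    (hk3 : ∀ j : ℕ, 1 ≤ j → (n:ℝ) / (2 * Real.logb 2 (2 * m / n)) ≤ (j:ℝ) → k ≤ j)
    (hchoose : (m.choose k : ℝ) ≤ (3*m/k)^k) :
    m.choose k ≤ 2^(8*n) ∧ k ≤ n := by
  set L : ℝ := Real.logb 2 (2 * m / n) with hLdef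
  have hn0 : (0:ℝ) < n := by positivity
  have hnR2 : (2:ℝ) ≤ n := by exact_mod_cast hn
  have hm0 : (0:ℝ) < m := lt_of_lt_of_le hn0 (by exact_mod_cast hnm)
  have hk0 : (0:ℝ) < k := by exact_mod_cast hk1
  have hx0 : (0:ℝ) < 2 * m / n := by positivity
  have hx2 : (2:ℝ) ≤ 2 * m / n := by
    rw [le_div_iff₀ hn0]
    have : (n:ℝ) ≤ m := by exact_mod_cast hnm
    nlinarith
  have hL1 : (1:ℝ) ≤ L := by
    rw [hLdef, show (1:ℝ) = Real.logb 2 2 by simp]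
    exact Real.logb_le_logb_of_le (by norm_num) (by norm_num) hx2
  have hL0 : (0:ℝ) < L := lt_of_lt_of_le one_pos hL1
  have hLn : L ≤ n := by
    rw [hLdef]
    rw [Real.logb_le_iff_le_rpow (by norm_num) hx0]
    rw [Real.rpow_natCast]
    have h2n : (m:ℝ) ≤ 2^n := by exact_mod_cast hm2
    rw [div_le_iff₀ hn0]
    calc (2:ℝ) * m ≤ 2 * 2^n := by nlinarith
      _ ≤ (2:ℝ)^n * n := by nlinarith [pow_pos (show (0:ℝ) < 2 by norm_num) n]
  -- upper bound on k
  set j : ℕ := ⌈(n:ℝ) / (2 * L)⌉₊ with hjdef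
  have hpos : 0 < (n:ℝ) / (2 * L) := by positivity
  have hj1 : 1 ≤ j := Nat.one_le_ceil_iff.2 hpos
  have hj2 : (n:ℝ) / (2 * L) ≤ (j:ℝ) := Nat.le_ceil _
  have hkj : k ≤ j := hk3 j hj1 hj2
  have hjub : (j:ℝ) < (n:ℝ) / (2 * L) + 1 := Nat.ceil_lt_add_one hpos.le
  have hkub : (k:ℝ) ≤ (n:ℝ) / (2 * L) + 1 := by
    have : (k:ℝ) ≤ (j:ℝ) := by exact_mod_cast hkj
    linarith
  have hkn : k ≤ n := by
    have h1 : (n:ℝ) / (2 * L) ≤ n / 2 := by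
      apply div_le_div_of_nonneg_left hn0.le (by norm_num)
      linarith
    have : (k:ℝ) ≤ (n:ℝ) := by linarith
    exact_mod_cast this
  have hkL : (k:ℝ) * L ≤ 3 * n / 2 := by
    have h1 : ((n:ℝ) / (2 * L) + 1) * L = n / 2 + L := by field_simp
    have h2 : (k:ℝ) * L ≤ ((n:ℝ) / (2 * L) + 1) * L :=
      mul_le_mul_of_nonneg_right hkub hL0.le
    rw [h1] at h2
    linarith
  have hnk2 : (n:ℝ) / (2 * k) ≤ L := by
    rw [div_le_iff₀ (by positivity)]
    rw [div_le_iff₀ (by positivity)] at hk2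
    linarith
  have h2L : (2:ℝ)^L = 2 * m / n := Real.rpow_logb (by norm_num) (by norm_num) hx0
  have hlog4 : (1:ℝ) ≤ Real.log 4 := by
    have h := Real.log_two_gt_d9
    have : Real.log 4 = 2 * Real.log 2 := by
      rw [show (4:ℝ) = 2^(2:ℕ) by norm_num, Real.log_pow]; push_cast; ring
    linarith
  have h4L : 3 * L ≤ (2:ℝ)^(2*L) := by
    have e1 : (2:ℝ)^(2*L) = Real.exp (Real.log 2 * (2*L)) := Real.rpow_def_of_pos (by norm_num) _
    have e3 : Real.exp (Real.log 2 * 2) = 4 := by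
      rw [show Real.log 2 * 2 = Real.log 2 + Real.log 2 by ring, Real.exp_add,
        Real.exp_log two_pos]; norm_num
    have e4 : (1:ℝ) + Real.log 2 * (2*(L-1)) ≤ Real.exp (Real.log 2 * (2*(L-1))) := by
      have := Real.add_one_le_exp (Real.log 2 * (2*(L-1))); linarith
    have hlog2 : (0.6931471803:ℝ) < Real.log 2 := Real.log_two_gt_d9
    have e5 : L ≤ Real.exp (Real.log 2 * (2*(L-1))) := by
      have h6 : (L-1) * 1 ≤ (L-1) * (2 * Real.log 2) :=
        mul_le_mul_of_nonneg_left (by linarith) (by linarith)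
      linarith
    calc 3*L ≤ 4*L := by linarith
      _ ≤ 4 * Real.exp (Real.log 2 * (2*(L-1))) := by linarith
      _ = Real.exp (Real.log 2 * 2) * Real.exp (Real.log 2 * (2*(L-1))) := by rw [e3]
      _ = Real.exp (Real.log 2 * (2*L)) := by rw [← Real.exp_add]; ring_nf
      _ = (2:ℝ)^(2*L) := e1.symm
  have hmk : 3 * (m:ℝ) / k ≤ (2:ℝ)^(3*L) := by
    have hmkid : 3 * (m:ℝ) / k = 3 * ((2*m/n) * ((n:ℝ)/(2*k))) := by field_simp
    have h2Lpos : (0:ℝ) < (2:ℝ)^L := Real.rpow_pos_of_pos (by norm_num) _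
    have step1 : 3 * (m:ℝ) / k ≤ (2:ℝ)^L * (3*L) := by
      rw [hmkid, ← h2L]
      have hnn : (0:ℝ) ≤ (n:ℝ)/(2*k) := by positivity
      have := mul_le_mul_of_nonneg_left hnk2 h2Lpos.le
      nlinarith
    calc 3 * (m:ℝ) / k ≤ (2:ℝ)^L * (3*L) := step1
      _ ≤ (2:ℝ)^L * (2:ℝ)^(2*L) := mul_le_mul_of_nonneg_left h4L h2Lpos.le
      _ = (2:ℝ)^(3*L) := by rw [← Real.rpow_add (by norm_num)]; ring_nf
  have hfinal : (m.choose k : ℝ) ≤ ((2:ℕ)^(8*n) : ℕ) := by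
    have h1 : (m.choose k : ℝ) ≤ ((2:ℝ)^(3*L))^k :=
      hchoose.trans (pow_le_pow_left₀ (by positivity) hmk k)
    have h2 : ((2:ℝ)^(3*L))^k = (2:ℝ)^(3*L*k) := by
      rw [← Real.rpow_natCast ((2:ℝ)^(3*L)) k, ← Real.rpow_mul (by norm_num)]
    have h3 : 3*L*(k:ℝ) ≤ 8*n := by nlinarith [hkL, hnR2]
    have h4 : (2:ℝ)^(3*L*(k:ℝ)) ≤ (2:ℝ)^((8*n : ℕ):ℝ) := by
      apply Real.rpow_le_rpow_of_exponent_le (by norm_num)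
      push_cast; linarith
    have h5 : (2:ℝ)^(((8*n : ℕ)):ℝ) = ((2:ℕ)^(8*n) : ℕ) := by
      rw [Real.rpow_natCast]; push_cast; ring
    rw [h2] at h1; exact h1.trans (h4.trans_eq h5)
  exact ⟨by exact_mod_cast hfinal, hkn⟩


open Metric Set
open scoped ENNReal

private lemma sum_orderIsoOfFin {m k : ℕ} (A : Finset (Fin m)) (hA : A.card = k)
    (f : Fin m → ℝ) :
    ∑ j : Fin k, f ((A.orderIsoOfFin hA j : Fin m)) = ∑ i ∈ A, f i := by
  rw [← Finset.sum_coe_sort A f]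
  exact Equiv.sum_comp (A.orderIsoOfFin hA).toEquiv (fun a => f (a : Fin m))

private lemma covering_step (p q : ℝ≥0∞) [Fact (1 ≤ p)] [Fact (1 ≤ q)] (hpq : p < q)
    {m k : ℕ} (hk1 : 1 ≤ k) (hkm : k ≤ m)
    (X Y : Type) [NormedAddCommGroup X] [NormedSpace ℝ X]
    [NormedAddCommGroup Y] [NormedSpace ℝ Y]
    (T0 : X →L[ℝ] Y)
    (Tm : PiLp p (fun _ : Fin m => X) →L[ℝ] PiLp q (fun _ : Fin m => Y))
    (Tk : PiLp p (fun _ : Fin k => X) →L[ℝ] PiLp q (fun _ : Fin k => Y))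
    (hTm : ∀ x i, Tm x i = T0 (x i)) (hTk : ∀ x i, Tk x i = T0 (x i))
    {ε : ℝ} (hε : 0 < ε) {F : Finset (PiLp q (fun _ : Fin k => Y))}
    (hFcov : ⇑Tk '' closedBall 0 1 ⊆ ⋃ c ∈ F, closedBall c ε) :
    ∃ G : Finset (PiLp q (fun _ : Fin m => Y)),
      G.card ≤ m.choose k * F.card ∧
      ⇑Tm '' closedBall 0 1 ⊆ ⋃ c ∈ G,
        closedBall c ((2:ℝ)^(1/q.toReal) *
          max ε (‖T0‖ / ((k:ℝ)+1)^(1/p.toReal - 1/q.toReal))) := by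
  classical
  have hpne : p ≠ ∞ := (hpq.trans_le le_top).ne
  have hp1 : 1 ≤ p := Fact.out
  have hp0 : p ≠ 0 := by
    intro h; rw [h] at hp1; exact absurd hp1 (by simp)
  set pr := p.toReal with hprdef
  have hpr0 : 0 < pr := ENNReal.toReal_pos hp0 hpne
  set θ : ℝ := ((k:ℝ)+1) ^ (-(1/pr)) with hθdef
  have hθ0 : (0:ℝ) < θ := Real.rpow_pos_of_pos (by positivity) _
  have hθpr : θ ^ pr = ((k:ℝ)+1)⁻¹ := by
    rw [hθdef, ← Real.rpow_mul (by positivity)]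
    rw [show -(1/pr) * pr = -1 by field_simp]
    exact Real.rpow_neg_one _
  set α : ℝ := 1/p.toReal - 1/q.toReal with hαdef
  set D : ℝ := ‖T0‖ / ((k:ℝ)+1)^α with hDdef
  have hD0 : 0 ≤ D := div_nonneg (norm_nonneg _) (Real.rpow_nonneg (by positivity) _)
  set R : ℝ := (2:ℝ)^(1/q.toReal) * max ε D with hRdef
  -- the subsets of cardinality k and the embedding of centers
  have cardOf : ∀ A : {A : Finset (Fin m) // A ∈ Finset.powersetCard k Finset.univ},
      A.1.card = k := fun A => (Finset.mem_powersetCard.1 A.2).2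
  set emb : {A : Finset (Fin m) // A ∈ Finset.powersetCard k Finset.univ} →
      (PiLp q (fun _ : Fin k => Y)) → (PiLp q (fun _ : Fin m => Y)) :=
    fun A c => WithLp.toLp q (fun i =>
      if h : i ∈ A.1 then c ((A.1.orderIsoOfFin (cardOf A)).symm ⟨i, h⟩) else 0) with hembdef
  refine ⟨((Finset.powersetCard k (Finset.univ : Finset (Fin m))).attach ×ˢ F).image
    (fun Ac => emb Ac.1 Ac.2), ?_, ?_⟩
  · calc _ ≤ ((Finset.powersetCard k (Finset.univ : Finset (Fin m))).attach ×ˢ F).card :=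
        Finset.card_image_le
      _ = (Finset.powersetCard k (Finset.univ : Finset (Fin m))).card * F.card := by
        rw [Finset.card_product, Finset.card_attach]
      _ = m.choose k * F.card := by
        rw [Finset.card_powersetCard, Finset.card_univ, Fintype.card_fin]
  · rintro y ⟨x, hx, rfl⟩
    have hxnorm : ‖x‖ ≤ 1 := mem_closedBall_zero_iff.1 hx
    have hsum1 : ∑ i, ‖x i‖ ^ pr ≤ 1 := by
      by_contra h
      push_neg at h
      have h2 : (1:ℝ) < (∑ i, ‖x i‖ ^ pr) ^ (1/pr) :=
        (Real.one_lt_rpow_iff_of_pos (by linarith)).2 (Or.inl ⟨h, by positivity⟩)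
      rw [PiLp.norm_eq_sum hpr0] at hxnorm
      linarith
    set B : Finset (Fin m) := Finset.univ.filter (fun i => θ < ‖x i‖) with hBdef
    have hBcard : B.card ≤ k := by
      rcases B.eq_empty_or_nonempty with hBe | hBne
      · simp [hBe]
      · have hk1p : (0:ℝ) < (k:ℝ)+1 := by positivity
        have h1 : (B.card : ℝ) * θ^pr < ∑ i ∈ B, ‖x i‖^pr := by
          have h := Finset.sum_lt_sum_of_nonempty hBne
            (f := fun _ => θ^pr) (g := fun i => ‖x i‖^pr)
            (fun i hi => Real.rpow_lt_rpow hθ0.le ((Finset.mem_filter.1 hi).2) hpr0)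
          simpa [Finset.sum_const, nsmul_eq_mul] using h
        have h2 : ∑ i ∈ B, ‖x i‖^pr ≤ 1 :=
          le_trans (Finset.sum_le_sum_of_subset_of_nonneg (Finset.subset_univ B)
            (fun i _ _ => Real.rpow_nonneg (norm_nonneg _) _)) hsum1
        rw [hθpr] at h1
        have h6 := mul_lt_mul_of_pos_right (lt_of_lt_of_le h1 h2) hk1p
        rw [one_mul, mul_assoc, inv_mul_cancel₀ (by positivity), mul_one] at h6
        have h7 : (B.card : ℝ) < (k:ℝ) + 1 := h6
        have h8 : B.card < k + 1 := by exact_mod_cast h7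
        omega
    obtain ⟨A, hBA, hAcard⟩ := Finset.exists_superset_card_eq hBcard
      (by simpa using hkm)
    have hAmem : A ∈ Finset.powersetCard k (Finset.univ : Finset (Fin m)) :=
      Finset.mem_powersetCard.2 ⟨Finset.subset_univ _, hAcard⟩
    set Ap : {A : Finset (Fin m) // A ∈ Finset.powersetCard k Finset.univ} :=
      ⟨A, hAmem⟩ with hApdef
    set σ := A.orderIsoOfFin (cardOf Ap) with hσdef
    set x' : PiLp p (fun _ : Fin k => X) := WithLp.toLp p (fun j => x (σ j : Fin m)) with hx'def
    have hx'app : ∀ j, x' j = x (σ j : Fin m) := fun j => rfl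
    have hx'sum : ∑ j, ‖x' j‖ ^ pr = ∑ i ∈ A, ‖x i‖ ^ pr := by
      simp only [hx'app]
      exact sum_orderIsoOfFin A (cardOf Ap) (fun i => ‖x i‖ ^ pr)
    have hx'norm : ‖x'‖ ≤ 1 := by
      rw [PiLp.norm_eq_sum hpr0]
      apply Real.rpow_le_one (by positivity) _ (by positivity)
      rw [hx'sum]
      exact le_trans (Finset.sum_le_sum_of_subset_of_nonneg (Finset.subset_univ A)
        (fun i _ _ => Real.rpow_nonneg (norm_nonneg _) _)) hsum1
    have hTkx' : Tk x' ∈ ⋃ c ∈ F, closedBall c ε :=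
      hFcov ⟨x', mem_closedBall_zero_iff.2 hx'norm, rfl⟩
    obtain ⟨c, hcF, hcball⟩ := Set.mem_iUnion₂.1 hTkx'
    have hgε : ‖Tk x' - c‖ ≤ ε := by
      rw [← dist_eq_norm]; exact mem_closedBall.1 hcball
    set g := Tk x' - c with hgdef
    -- coordinates of the difference
    set d := Tm x - emb Ap c with hddef
    have hdA : ∀ j : Fin k, d (σ j : Fin m) = g j := by
      intro j
      have hmem : (σ j : Fin m) ∈ A := (σ j).2
      have h1 : d (σ j : Fin m) = T0 (x (σ j : Fin m)) - emb Ap c (σ j : Fin m) := by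
        rw [hddef, PiLp.sub_apply, hTm]
      have h2 : emb Ap c (σ j : Fin m) = c j := by
        rw [hembdef]
        simp only
        rw [dif_pos hmem]
        congr 1
        have : (⟨(σ j : Fin m), hmem⟩ : {z // z ∈ A}) = σ j := by
          apply Subtype.ext; rfl
        rw [show A.orderIsoOfFin (cardOf Ap) = σ from rfl, this]
        rw [σ.symm_apply_apply j]
      rw [h1, h2, hgdef, PiLp.sub_apply, hTk, hx'app]
    have hdN : ∀ i : Fin m, i ∉ A → d i = T0 (x i) ∧ ‖x i‖ ≤ θ := by
      intro i hi
      constructor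
      · rw [hddef, PiLp.sub_apply, hTm]
        rw [hembdef]
        simp only
        rw [dif_neg hi, sub_zero]
      · have : i ∉ B := fun h => hi (hBA h)
        rw [hBdef] at this
        simp only [Finset.mem_filter, Finset.mem_univ, true_and, not_lt] at this
        exact this
    have hmemG : emb Ap c ∈ ((Finset.powersetCard k (Finset.univ : Finset (Fin m))).attach
        ×ˢ F).image (fun Ac => emb Ac.1 Ac.2) :=
      Finset.mem_image.2 ⟨(Ap, c), Finset.mem_product.2 ⟨Finset.mem_attach _ _, hcF⟩, rfl⟩
    refine Set.mem_iUnion₂.2 ⟨emb Ap c, hmemG, ?_⟩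
    rw [mem_closedBall, dist_eq_norm, ← hddef]
    -- now estimate ‖d‖, splitting on q = ∞ or not
    rcases eq_or_ne q ∞ with hq | hq
    · -- sup norm case
      subst hq
      have hq0 : (∞ : ℝ≥0∞).toReal = 0 := by simp
      have hR' : R = max ε D := by
        rw [hRdef, hq0]
        norm_num
      have hDθ : ‖T0‖ * θ = D := by
        rw [hDdef, hθdef, hαdef, hq0]
        rw [show 1/pr - 1/(0:ℝ) = 1/pr by norm_num]
        rw [Real.rpow_neg (by positivity)]
        exact (div_eq_mul_inv _ _).symm
      rw [hR']
      have hnorm : ‖d‖ = ⨆ i, ‖d i‖ := PiLp.norm_eq_ciSup d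
      rw [hnorm]
      have hm1 : 1 ≤ m := le_trans hk1 hkm
      have : Nonempty (Fin m) := ⟨⟨0, by omega⟩⟩
      apply ciSup_le
      intro i
      by_cases hiA : i ∈ A
      · have hj : (σ (σ.symm ⟨i, hiA⟩) : Fin m) = i := by
          rw [σ.apply_symm_apply]
        have := hdA (σ.symm ⟨i, hiA⟩)
        rw [hj] at this
        rw [this]
        have h1 : ‖g (σ.symm ⟨i, hiA⟩)‖ ≤ ‖g‖ := by
          rw [PiLp.norm_eq_ciSup]
          exact le_ciSup (f := fun j => ‖g j‖) (Set.Finite.bddAbove (Set.finite_range _)) _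
        exact le_max_of_le_left (h1.trans hgε)
      · obtain ⟨h1, h2⟩ := hdN i hiA
        rw [h1]
        refine le_max_of_le_right ?_
        rw [← hDθ]
        calc ‖T0 (x i)‖ ≤ ‖T0‖ * ‖x i‖ := T0.le_opNorm _
          _ ≤ ‖T0‖ * θ := mul_le_mul_of_nonneg_left h2 (norm_nonneg _)
    · -- q finite case
      set qr := q.toReal with hqrdef
      have hqr0 : 0 < qr := ENNReal.toReal_pos (by
        intro h; rw [h] at hpq; exact absurd hpq (by simp)) hq
      have hprqr : pr ≤ qr := by
        rw [hprdef, hqrdef]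
        exact ENNReal.toReal_mono hq hpq.le
      have hmax0 : 0 < max ε D := lt_max_of_lt_left hε
      -- the two partial sums
      have hsumA : ∑ i ∈ A, ‖d i‖ ^ qr ≤ ε ^ qr := by
        have h1 : ∑ i ∈ A, ‖d i‖ ^ qr = ∑ j : Fin k, ‖g j‖ ^ qr := by
          rw [← sum_orderIsoOfFin A (cardOf Ap) (fun i => ‖d i‖ ^ qr)]
          exact Finset.sum_congr rfl (fun j _ => by rw [hdA j])
        have h2 : ∑ j : Fin k, ‖g j‖ ^ qr = ‖g‖ ^ qr := by
          rw [PiLp.norm_eq_sum hqr0, ← Real.rpow_mul (by positivity),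
            one_div_mul_cancel hqr0.ne', Real.rpow_one]
        rw [h1, h2]
        exact Real.rpow_le_rpow (norm_nonneg _) hgε hqr0.le
      have hsumN : ∑ i ∈ Finset.univ \ A, ‖d i‖ ^ qr ≤ D ^ qr := by
        have hterm : ∀ i ∈ Finset.univ \ A,
            ‖d i‖ ^ qr ≤ ‖T0‖^qr * θ^(qr - pr) * ‖x i‖^pr := by
          intro i hi
          have hiA : i ∉ A := (Finset.mem_sdiff.1 hi).2
          obtain ⟨h1, h2⟩ := hdN i hiA
          rw [h1]
          calc ‖T0 (x i)‖ ^ qr ≤ (‖T0‖ * ‖x i‖) ^ qr :=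
              Real.rpow_le_rpow (norm_nonneg _) (T0.le_opNorm _) hqr0.le
            _ = ‖T0‖^qr * ‖x i‖^qr := Real.mul_rpow (norm_nonneg _) (norm_nonneg _)
            _ = ‖T0‖^qr * (‖x i‖^(qr-pr) * ‖x i‖^pr) := by
                rw [← Real.rpow_add_of_nonneg (norm_nonneg _) (by linarith) hpr0.le,
                  sub_add_cancel]
            _ ≤ ‖T0‖^qr * (θ^(qr-pr) * ‖x i‖^pr) := by
                apply mul_le_mul_of_nonneg_left _ (Real.rpow_nonneg (norm_nonneg _) _)
                apply mul_le_mul_of_nonneg_right _ (Real.rpow_nonneg (norm_nonneg _) _)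
                exact Real.rpow_le_rpow (norm_nonneg _) h2 (by linarith)
            _ = ‖T0‖^qr * θ^(qr - pr) * ‖x i‖^pr := by ring
        calc ∑ i ∈ Finset.univ \ A, ‖d i‖ ^ qr
            ≤ ∑ i ∈ Finset.univ \ A, ‖T0‖^qr * θ^(qr - pr) * ‖x i‖^pr :=
              Finset.sum_le_sum hterm
          _ = ‖T0‖^qr * θ^(qr - pr) * ∑ i ∈ Finset.univ \ A, ‖x i‖^pr := by
              rw [Finset.mul_sum]
          _ ≤ ‖T0‖^qr * θ^(qr - pr) * 1 := by
              apply mul_le_mul_of_nonneg_left _ (by positivity)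
              exact le_trans (Finset.sum_le_sum_of_subset_of_nonneg
                (Finset.subset_univ _) (fun i _ _ => Real.rpow_nonneg (norm_nonneg _) _))
                hsum1
          _ = D ^ qr := by
              rw [mul_one, hDdef, Real.div_rpow (norm_nonneg _)
                (Real.rpow_nonneg (by positivity) _), hθdef,
                ← Real.rpow_mul (by positivity), ← Real.rpow_mul (by positivity)]
              rw [hαdef]
              rw [show -(1/pr) * (qr - pr) = -((1/pr - 1/qr) * qr) by field_simp,
                Real.rpow_neg (by positivity), ← div_eq_mul_inv]
      have hsplit : ∑ i, ‖d i‖ ^ qr ≤ 2 * (max ε D) ^ qr := by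
        have h1 : ∑ i, ‖d i‖ ^ qr
            = ∑ i ∈ A, ‖d i‖ ^ qr + ∑ i ∈ Finset.univ \ A, ‖d i‖ ^ qr := by
          rw [← Finset.sum_sdiff (Finset.subset_univ A)]; ring
        have h2 : ε ^ qr ≤ (max ε D) ^ qr :=
          Real.rpow_le_rpow hε.le (le_max_left _ _) hqr0.le
        have h3 : D ^ qr ≤ (max ε D) ^ qr :=
          Real.rpow_le_rpow hD0 (le_max_right _ _) hqr0.le
        rw [h1]; linarith
      have hdnorm : ‖d‖ ≤ R := by
        rw [PiLp.norm_eq_sum hqr0, ← hqrdef]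
        have h1 : (∑ i, ‖d i‖ ^ qr) ^ (1/qr) ≤ (2 * (max ε D) ^ qr) ^ (1/qr) :=
          Real.rpow_le_rpow (by positivity) hsplit (by positivity)
        have h2 : (2 * (max ε D) ^ qr) ^ (1/qr)
            = (2:ℝ)^(1/qr) * max ε D := by
          rw [Real.mul_rpow (by norm_num) (Real.rpow_nonneg hmax0.le _),
            ← Real.rpow_mul hmax0.le, mul_one_div, div_self hqr0.ne', Real.rpow_one]
        rw [h2] at h1
        exact h1.trans_eq (by rw [hRdef, hqrdef])
      exact hdnorm

/-- The key iteration step in the proof of Theorem 3.2: there is a positive integer `C₆`,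
depending only on `p` and `q`, such that for all `2 ≤ n ≤ m ≤ 2ⁿ`, every `T₀ : X → Y` and
every `s ≥ 1`,
`e_{C₆ n + s}(T(m)) ≤ 2^{1/q} max(e_s(T(k)), ‖T₀‖/(k+1)^α)`,
where `k` is the smallest positive integer with `k ≥ n/(2 log₂(2m/n))` and `T(j)` denotes
the diagonal operator `(x₁,…,x_j) ↦ (T₀ x₁, …, T₀ x_j) : ℓ_p^j(X) → ℓ_q^j(Y)`. -/
theorem entropy_diagonal_iteration_step (p q : ℝ≥0∞) [Fact (1 ≤ p)] [Fact (1 ≤ q)]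
    (hpq : p < q) :
    ∃ C₆ : ℕ, 0 < C₆ ∧
      ∀ (m n : ℕ) (hn : 2 ≤ n) (hnm : n ≤ m) (hm2 : m ≤ 2 ^ n) (k : ℕ),
        (1 ≤ k ∧ (n : ℝ) / (2 * Real.logb 2 (2 * m / n)) ≤ (k : ℝ) ∧
          (∀ j : ℕ, 1 ≤ j → (n : ℝ) / (2 * Real.logb 2 (2 * m / n)) ≤ (j : ℝ) → k ≤ j)) →
        ∀ (X Y : Type) [NormedAddCommGroup X] [NormedSpace ℝ X]
          [NormedAddCommGroup Y] [NormedSpace ℝ Y]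
          (T0 : X →L[ℝ] Y)
          (Tm : PiLp p (fun _ : Fin m => X) →L[ℝ] PiLp q (fun _ : Fin m => Y))
          (Tk : PiLp p (fun _ : Fin k => X) →L[ℝ] PiLp q (fun _ : Fin k => Y)),
          (∀ x i, Tm x i = T0 (x i)) → (∀ x i, Tk x i = T0 (x i)) →
          ∀ s : ℕ, 1 ≤ s →
            entropyNum (C₆ * n + s) Tm ≤
              (2 : ℝ) ^ (1 / q.toReal) *
                max (entropyNum s Tk)
                  (‖T0‖ / ((k : ℝ) + 1) ^ (1 / p.toReal - 1 / q.toReal)) := by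
  refine ⟨8, by norm_num, ?_⟩
  intro m n hn hnm hm2 k hk X Y _ _ _ _ T0 Tm Tk hTm hTk s hs
  obtain ⟨hk1, hk2, hk3⟩ := hk
  obtain ⟨hcb, hkn⟩ := count_bound hn hnm hm2 hk1 hk2 hk3 (choose_le_aux m k hk1)
  have hkm : k ≤ m := hkn.trans hnm
  set D : ℝ := ‖T0‖ / ((k:ℝ)+1)^(1/p.toReal - 1/q.toReal) with hDdef
  have hD0 : 0 ≤ D := div_nonneg (norm_nonneg _) (Real.rpow_nonneg (by positivity) _)
  have h2q0 : (0:ℝ) < (2:ℝ)^(1/q.toReal) := Real.rpow_pos_of_pos two_pos _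
  set S : Set ℝ := {ε : ℝ | 0 < ε ∧ ∃ F : Finset (PiLp q (fun _ : Fin k => Y)),
    F.card ≤ 2 ^ (s - 1) ∧ ⇑Tk '' closedBall 0 1 ⊆ ⋃ c ∈ F, closedBall c ε} with hSdef
  have hSne : S.Nonempty := by
    refine ⟨‖Tk‖ + 1, by positivity, {0}, ?_, ?_⟩
    · simpa using Nat.one_le_two_pow
    · rintro y ⟨x, hx, rfl⟩
      refine Set.mem_iUnion₂.2 ⟨0, Finset.mem_singleton_self 0, ?_⟩
      rw [mem_closedBall, dist_zero_right]
      have h1 : ‖Tk x‖ ≤ ‖Tk‖ * ‖x‖ := Tk.le_opNorm _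
      have h2 : ‖x‖ ≤ 1 := mem_closedBall_zero_iff.1 hx
      nlinarith [norm_nonneg Tk, norm_nonneg x]
  have key : ∀ ε ∈ S, entropyNum (8*n+s) Tm ≤ (2:ℝ)^(1/q.toReal) * max ε D := by
    intro ε hεS
    obtain ⟨hε, F, hFcard, hFcov⟩ := hεS
    obtain ⟨G, hGcard, hGcov⟩ :=
      covering_step p q hpq hk1 hkm X Y T0 Tm Tk hTm hTk hε hFcov
    apply csInf_le ⟨0, fun z hz => hz.1.le⟩
    refine ⟨by positivity, G, ?_, hGcov⟩
    calc G.card ≤ m.choose k * F.card := hGcard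
      _ ≤ 2^(8*n) * 2^(s-1) := Nat.mul_le_mul hcb hFcard
      _ = 2^(8*n+s-1) := by rw [← pow_add]; congr 1; omega
  have hSinf : entropyNum s Tk = sInf S := rfl
  apply le_of_forall_pos_le_add
  intro η hη
  have hδ : 0 < η / (2:ℝ)^(1/q.toReal) := by positivity
  obtain ⟨ε, hεS, hεlt⟩ := Real.lt_sInf_add_pos hSne hδ
  have h1 := key ε hεS
  have h2 : max ε D ≤ max (sInf S) D + η / (2:ℝ)^(1/q.toReal) := by
    refine max_le ?_ ?_
    · have := le_max_left (sInf S) D; linarith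
    · have := le_max_right (sInf S) D; linarith
  calc entropyNum (8*n+s) Tm
      ≤ (2:ℝ)^(1/q.toReal) * (max (sInf S) D + η / (2:ℝ)^(1/q.toReal)) :=
        h1.trans (mul_le_mul_of_nonneg_left h2 h2q0.le)
    _ = (2:ℝ)^(1/q.toReal) * max (sInf S) D + η := by
        rw [mul_add, mul_div_cancel₀ _ h2q0.ne']
    _ = (2:ℝ)^(1/q.toReal) * max (entropyNum s Tk) D + η := by rw [hSinf]
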